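/- For d ≥ 2 and i in {2,...,d-1}, every monomial appearing with nonzero coefficient in R_i = Res(f, H_i(f)) ∈ Z[a_1,...,a_{d-1}] has total degree at least d-i+1, and the unique monomial of total degree exactly d-i+1 is a_{d-1}^{d-i} a_{d-i} (with coefficient (-1)^{(d-1)(d-i)} C(d,i)^{d-1}). -/

import Mathlib

open Polynomial

/-- The Sylvester matrix of `f` (regarded as having degree `m`) and `g`
(regarded as having degree `n`). -/
def sylvester {R : Type*} [CommRing R] (f g : Polynomial R) (m n : ℕ) :
    Matrix (Fin (m + n)) (Fin (m + n)) R :=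
  Matrix.of fun i j =>
    if (i : ℕ) < n then
      (if (i : ℕ) ≤ j ∧ (j : ℕ) ≤ (i : ℕ) + m then f.coeff (m + i - j) else 0)
    else
      (if (i : ℕ) - n ≤ j ∧ (j : ℕ) ≤ ((i : ℕ) - n) + n then g.coeff (n + ((i : ℕ) - n) - j) else 0)

/-- The resultant of `f` and `g`, regarded as polynomials of degrees `m` and `n`. -/
def res {R : Type*} [CommRing R] (f g : Polynomial R) (m n : ℕ) : R :=
  (_root_.sylvester f g m n).det

/-- The generic monic polynomial `x^d + a_1 x^{d-1} + ⋯ + a_{d-1} x` with zero constant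
term over `ℤ[a_1, …, a_{d-1}]`, where `MvPolynomial.X j` plays the role of `a_j`. -/
noncomputable def genF (d : ℕ) : Polynomial (MvPolynomial ℕ ℤ) :=
  X ^ d + ∑ j ∈ Finset.Icc 1 (d - 1), C (MvPolynomial.X j) * X ^ (d - j)

/-- `R_i = Res(f, H_i(f))`, the resultant of the generic polynomial and its `i`-th Hasse
derivative, regarded as polynomials of degrees `d` and `d - i`. -/
noncomputable def Rres (d i : ℕ) : MvPolynomial ℕ ℤ :=
  res (genF d) (Polynomial.hasseDeriv i (genF d)) d (d - i)


lemma genF_coeff (d k : ℕ) (hd : 1 ≤ d) :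
    (genF d).coeff k =
      if k = d then 1 else if 1 ≤ k ∧ k ≤ d - 1 then MvPolynomial.X (d - k) else 0 := by
  rw [genF, Polynomial.coeff_add, Polynomial.coeff_X_pow, Polynomial.finset_sum_coeff]
  have h1 : ∀ j ∈ Finset.Icc 1 (d-1), (C (MvPolynomial.X (R := ℤ) j) * X ^ (d - j)).coeff k
      = if k = d - j then MvPolynomial.X j else 0 := by
    intro j hj
    rw [Polynomial.coeff_C_mul, Polynomial.coeff_X_pow]
    split <;> simp
  rw [Finset.sum_congr rfl h1]
  by_cases hk : 1 ≤ k ∧ k ≤ d - 1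
  · have hkd : ¬ (k = d) := by omega
    rw [if_neg hkd, if_pos hk, Finset.sum_eq_single (d - k)]
    · rw [if_pos (by omega)]
      have h2 : d - (d - k) = k := by omega
      simp [h2, hkd]
    · intro j hj hne
      simp only [Finset.mem_Icc] at hj
      rw [if_neg (by omega)]
    · intro h
      exact absurd (Finset.mem_Icc.2 (by omega)) h
  · rw [if_neg hk, Finset.sum_eq_zero]
    · simp
    · intro j hj
      simp only [Finset.mem_Icc] at hj
      rw [if_neg (by omega)]

def ecoef (d i r c : ℕ) : ℤ :=
  if r < d - i then
    (if c = r then 1 else if r < c ∧ c < r + d then 1 else 0)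
  else
    (if c = r - (d - i) then d.choose i
     else if r - (d - i) < c ∧ c ≤ r then ((d - (c - (r - (d - i)))).choose i : ℤ) else 0)

noncomputable def emon (d i r c : ℕ) : ℕ →₀ ℕ :=
  if r < d - i then
    (if c = r then 0 else if r < c ∧ c < r + d then Finsupp.single (c - r) 1 else 0)
  else
    (if c = r - (d - i) then 0
     else if r - (d - i) < c ∧ c ≤ r then Finsupp.single (c - (r - (d - i))) 1 else 0)

noncomputable def E (d i r c : ℕ) : MvPolynomial ℕ ℤ :=
  MvPolynomial.monomial (emon d i r c) (ecoef d i r c)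

lemma sylvester_entry (d i : ℕ) (hd : 2 ≤ d) (hi1 : 2 ≤ i) (hi2 : i ≤ d - 1)
    (r c : Fin (d + (d - i))) :
    _root_.sylvester (genF d) (Polynomial.hasseDeriv i (genF d)) d (d - i) r c = E d i r c := by
  have hn : d - i ≤ d := by omega
  rw [_root_.sylvester, E, ecoef, emon]
  simp only [Matrix.of_apply]
  by_cases hr : (r : ℕ) < d - i
  · rw [if_pos hr, if_pos hr, if_pos hr]
    by_cases h1 : (c : ℕ) = r
    · rw [if_pos (by omega), if_pos h1, if_pos h1]
      rw [show d + (r:ℕ) - c = d by omega, genF_coeff d d (by omega), if_pos rfl]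
      simp
    · rw [if_neg h1, if_neg h1]
      by_cases h2 : (r : ℕ) < c ∧ (c : ℕ) < r + d
      · rw [if_pos (by omega), if_pos h2, if_pos h2]
        rw [genF_coeff d _ (by omega), if_neg (by omega), if_pos (by omega)]
        rw [show d - (d + (r:ℕ) - c) = (c:ℕ) - r by omega]
        simp [MvPolynomial.X]
      · rw [if_neg h2, if_neg h2]
        by_cases h3 : (r : ℕ) ≤ c ∧ (c : ℕ) ≤ r + d
        · rw [if_pos h3]
          rw [show d + (r:ℕ) - c = 0 by omega, genF_coeff d 0 (by omega)]
          rw [if_neg (by omega), if_neg (by omega)]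
          simp
        · rw [if_neg h3]; simp [h2]
  · rw [if_neg hr, if_neg hr, if_neg hr]
    set k := (r : ℕ) - (d - i) with hk
    have hkd : k ≤ d - 1 := by
      have := r.isLt; omega
    by_cases h1 : (c : ℕ) = k
    · rw [if_pos (by omega), if_pos h1, if_pos h1]
      rw [show d - i + k - (c:ℕ) = d - i by omega, Polynomial.hasseDeriv_coeff]
      rw [show d - i + i = d by omega, genF_coeff d d (by omega), if_pos rfl]
      simp
    · rw [if_neg h1, if_neg h1]
      by_cases h2 : k < (c : ℕ) ∧ (c : ℕ) ≤ r
      · rw [if_pos (by omega), if_pos h2, if_pos h2]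
        rw [Polynomial.hasseDeriv_coeff]
        set l := (c : ℕ) - k with hl
        have hl1 : 1 ≤ l := by omega
        have hl2 : l ≤ d - i := by omega
        rw [show d - i + k - (c:ℕ) = d - i - l by omega]
        rw [show d - i - l + i = d - l by omega]
        rw [genF_coeff d (d - l) (by omega), if_neg (by omega), if_pos (by omega)]
        rw [show d - (d - l) = l by omega]
        rw [MvPolynomial.X, show (((d - l).choose i : ℕ) : MvPolynomial ℕ ℤ)
            = MvPolynomial.C (((d - l).choose i : ℕ) : ℤ) by push_cast; rfl,
          MvPolynomial.C_mul_monomial, mul_one]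
      · rw [if_neg h2]
        by_cases h3 : k ≤ (c : ℕ) ∧ (c : ℕ) ≤ k + (d - i)
        · rw [if_pos h3]; omega
        · rw [if_neg h3, if_neg h2]; simp

noncomputable def M1 (d i : ℕ) :
    Matrix (Fin (d + (d - i) - 1)) (Fin (d + (d - i) - 1)) (MvPolynomial ℕ ℤ) :=
  Matrix.of fun r c => E d i r c

lemma E_col_last (d i : ℕ) (hd : 2 ≤ d) (hi1 : 2 ≤ i) (hi2 : i ≤ d - 1)
    (r : ℕ) (hr : r < d + (d - i) - 1) : E d i r (d + (d - i) - 1) = 0 := by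
  rw [E, ecoef, emon]
  by_cases h : r < d - i
  · rw [if_pos h, if_pos h, if_neg (by omega), if_neg (by omega),
      if_neg (by omega), if_neg (by omega)]
    simp
  · rw [if_neg h, if_neg h, if_neg (by omega), if_neg (by omega),
      if_neg (by omega), if_neg (by omega)]
    simp

lemma E_corner (d i : ℕ) (hd : 2 ≤ d) (hi1 : 2 ≤ i) (hi2 : i ≤ d - 1) :
    E d i (d + (d - i) - 1) (d + (d - i) - 1) = MvPolynomial.X (d - i) := by
  rw [E, ecoef, emon]
  have e1 : d + (d - i) - 1 - (d + (d - i) - 1 - (d - i)) = d - i := by omega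
  split_ifs with h1 h2 h3
  all_goals try (exfalso; omega)
  rw [e1, show d - (d - i) = i by omega, Nat.choose_self, MvPolynomial.X]
  norm_num

lemma Rres_eq (d i : ℕ) (hd : 2 ≤ d) (hi1 : 2 ≤ i) (hi2 : i ≤ d - 1) :
    Rres d i = (M1 d i).det * MvPolynomial.X (d - i) := by
  have hK : (d + (d - i) - 1) + 1 = d + (d - i) := by omega
  let e : Fin (d + (d - i) - 1) ⊕ Fin 1 ≃ Fin (d + (d - i)) :=
    (finSumFinEquiv).trans (finCongr hK)
  rw [Rres, res, ← Matrix.det_submatrix_equiv_self e]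
  have hval : ∀ x : Fin (d + (d - i) - 1) ⊕ Fin 1, ((e x : Fin (d + (d-i))) : ℕ) =
      Sum.elim (fun j : Fin (d + (d - i) - 1) => (j : ℕ)) (fun _ => d + (d - i) - 1) x := by
    rintro (j | j)
    · simp [e, finSumFinEquiv]
    · have : (j : ℕ) = 0 := by omega
      simp [e, finSumFinEquiv, this]
  have hsub : (_root_.sylvester (genF d) (Polynomial.hasseDeriv i (genF d)) d (d - i)).submatrix e e =
      Matrix.fromBlocks (M1 d i) 0
        (Matrix.of fun (_ : Fin 1) (c : Fin (d + (d - i) - 1)) => E d i (d + (d - i) - 1) c)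
        (Matrix.of fun _ _ => MvPolynomial.X (d - i)) := by
    ext x y : 2
    rw [Matrix.submatrix_apply, sylvester_entry d i hd hi1 hi2]
    rcases x with (x | x) <;> rcases y with (y | y) <;>
      simp only [hval, Sum.elim_inl, Sum.elim_inr, Matrix.fromBlocks_apply₁₁,
        Matrix.fromBlocks_apply₁₂, Matrix.fromBlocks_apply₂₁, Matrix.fromBlocks_apply₂₂,
        Matrix.of_apply, Matrix.zero_apply, M1]
    · rw [E_col_last d i hd hi1 hi2 x x.isLt]
    · rw [E_corner d i hd hi1 hi2]
  rw [hsub, Matrix.det_fromBlocks_zero₁₂, Matrix.det_fin_one]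
  rfl

lemma prod_monomial {α : Type*} (s : Finset α) (f : α → (ℕ →₀ ℕ)) (g : α → ℤ) :
    ∏ x ∈ s, (MvPolynomial.monomial (f x) (g x)) =
      MvPolynomial.monomial (∑ x ∈ s, f x) (∏ x ∈ s, g x) := by
  classical
  induction s using Finset.cons_induction with
  | empty => simp [MvPolynomial.monomial_zero']
  | cons a s ha ih =>
    rw [Finset.prod_cons, ih, Finset.sum_cons, Finset.prod_cons, MvPolynomial.monomial_mul]

def wtF (μ : ℕ →₀ ℕ) : ℕ := μ.sum fun l e => e * l

lemma wtF_zero : wtF 0 = 0 := by simp [wtF]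

lemma wtF_add (μ ν : ℕ →₀ ℕ) : wtF (μ + ν) = wtF μ + wtF ν := by
  simp [wtF, Finsupp.sum_add_index, add_mul]

lemma wtF_single (l e : ℕ) : wtF (Finsupp.single l e) = e * l := by
  simp [wtF, Finsupp.sum_single_index]

lemma wtF_sum {α : Type*} (s : Finset α) (f : α → (ℕ →₀ ℕ)) :
    wtF (∑ x ∈ s, f x) = ∑ x ∈ s, wtF (f x) := by
  classical
  induction s using Finset.cons_induction with
  | empty => simp [wtF_zero]
  | cons a s ha ih => rw [Finset.sum_cons, wtF_add, ih, Finset.sum_cons]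

def offR (d i r : ℕ) : ℕ := if r < d - i then r else r - (d - i)

lemma entry_cases (d i r c : ℕ) (h : ecoef d i r c ≠ 0) :
    (c = offR d i r ∧ emon d i r c = 0) ∨
    (offR d i r < c ∧ emon d i r c = Finsupp.single (c - offR d i r) 1 ∧
      (if r < d - i then c - offR d i r ≤ d - 1 else c - offR d i r ≤ d - i)) := by
  rw [ecoef] at h
  rw [emon, offR]
  split_ifs at h ⊢ with h1 h2 h3 h4 h5
  · left; exact ⟨h2, rfl⟩
  · right; exact ⟨by omega, rfl, by omega⟩
  · exact absurd rfl h
  · left; exact ⟨h4, rfl⟩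
  · right; exact ⟨by omega, rfl, by omega⟩
  · exact absurd rfl h

lemma val_add_one_mod (K : ℕ) (x : Fin (K + 1)) :
    ((x + 1 : Fin (K + 1)) : ℕ) = ((x : ℕ) + 1) % (K + 1) := by
  rw [Fin.val_add, Fin.val_one', Nat.add_mod_mod]

lemma rot_pow_apply (K m : ℕ) (c : Fin K) :
    ((((finRotate K) ^ m) c : Fin K) : ℕ) = ((c : ℕ) + m) % K := by
  induction m generalizing c with
  | zero => simp [Nat.mod_eq_of_lt c.isLt]
  | succ m ih =>
    rw [pow_succ, Equiv.Perm.mul_apply]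
    cases K with
    | zero => exact c.elim0
    | succ K' =>
      rw [finRotate_succ_apply, ih (c + 1), val_add_one_mod, Nat.mod_add_mod,
        show (c : ℕ) + 1 + m = (c : ℕ) + (m + 1) by ring]

lemma rot_pow_sign (K m : ℕ) (hK : 1 ≤ K) :
    Equiv.Perm.sign ((finRotate K) ^ m) = (-1) ^ ((K - 1) * m) := by
  cases K with
  | zero => omega
  | succ K' => rw [map_pow, sign_finRotate, ← pow_mul, Nat.succ_sub_one]

noncomputable def nuP (d i : ℕ) (σ : Equiv.Perm (Fin (d + (d - i) - 1))) : ℕ →₀ ℕ :=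
  ∑ c, emon d i (σ c) c

def aP (d i : ℕ) (σ : Equiv.Perm (Fin (d + (d - i) - 1))) : ℤ :=
  ∏ c, ecoef d i (σ c) c

lemma prod_M1_entries (d i : ℕ) (σ : Equiv.Perm (Fin (d + (d - i) - 1))) :
    ∏ c, M1 d i (σ c) c = MvPolynomial.monomial (nuP d i σ) (aP d i σ) := by
  rw [nuP, aP, ← prod_monomial]
  rfl

lemma aP_ne_zero (d i : ℕ) (σ : Equiv.Perm (Fin (d + (d - i) - 1)))
    (h : aP d i σ ≠ 0) : ∀ c, ecoef d i (σ c) c ≠ 0 := by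
  intro c
  rw [aP, Finset.prod_ne_zero_iff] at h
  exact h c (Finset.mem_univ c)

lemma wt_nuP (d i : ℕ) (hd : 2 ≤ d) (hi1 : 2 ≤ i) (hi2 : i ≤ d - 1)
    (σ : Equiv.Perm (Fin (d + (d - i) - 1)))
    (hz : ∀ c, ecoef d i (σ c) c ≠ 0) :
    wtF (nuP d i σ) = (d - i) * (d - 1) := by
  have h1 : ∀ c : Fin (d + (d - i) - 1), offR d i (σ c) ≤ (c : ℕ) ∧
      wtF (emon d i (σ c) c) = (c : ℕ) - offR d i (σ c) := by
    intro c
    rcases entry_cases d i (σ c) c (hz c) with ⟨he, hm⟩ | ⟨hlt, hm, _⟩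
    · rw [hm, wtF_zero]; omega
    · rw [hm, wtF_single, one_mul]; exact ⟨le_of_lt hlt, rfl⟩
  rw [nuP, wtF_sum]
  have hcast : ((∑ c, wtF (emon d i (σ c) c) : ℕ) : ℤ) = (((d - i) * (d - 1) : ℕ) : ℤ) := by
    push_cast
    rw [Finset.sum_congr rfl (fun c _ => by
      rw [(h1 c).2, Nat.cast_sub (h1 c).1])]
    rw [Finset.sum_sub_distrib]
    rw [show (∑ c : Fin (d + (d - i) - 1), ((offR d i (σ c) : ℕ) : ℤ))
        = ∑ c : Fin (d + (d - i) - 1), ((offR d i c : ℕ) : ℤ) from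
      Equiv.sum_comp σ (fun r => ((offR d i r : ℕ) : ℤ))]
    rw [← Finset.sum_sub_distrib]
    have h2 : ∀ c : Fin (d + (d - i) - 1), ((c : ℕ) : ℤ) - ((offR d i c : ℕ) : ℤ)
        = (fun x : ℕ => if x < d - i then (0 : ℤ) else (d - i : ℕ)) (c : ℕ) := by
      intro c
      simp only [offR]
      split_ifs with h
      · simp
      · rw [Nat.cast_sub (by omega)]; ring
    rw [Finset.sum_congr rfl (fun c _ => h2 c)]
    rw [Fin.sum_univ_eq_sum_range (fun x => if x < d - i then (0 : ℤ) else ((d - i : ℕ) : ℤ))]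
    rw [← Finset.sum_range_add_sum_Ico _ (show d - i ≤ d + (d - i) - 1 by omega)]
    rw [Finset.sum_eq_zero (fun x hx => by
      rw [if_pos (Finset.mem_range.mp hx)])]
    rw [Finset.sum_congr rfl (fun x hx => by
      rw [if_neg (by have := (Finset.mem_Ico.mp hx).1; omega)])]
    rw [Finset.sum_const, Nat.card_Ico, nsmul_eq_mul]
    push_cast
    have : d + (d - i) - 1 - (d - i) = d - 1 := by omega
    rw [this]
    ring
  exact_mod_cast hcast

lemma supp_nuP (d i : ℕ) (hd : 2 ≤ d) (hi1 : 2 ≤ i) (hi2 : i ≤ d - 1)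
    (σ : Equiv.Perm (Fin (d + (d - i) - 1)))
    (hz : ∀ c, ecoef d i (σ c) c ≠ 0) :
    (nuP d i σ).support ⊆ Finset.Icc 1 (d - 1) := by
  rw [nuP]
  refine Finsupp.support_finset_sum.trans ?_
  intro l hl
  rw [Finset.mem_biUnion] at hl
  obtain ⟨c, -, hc⟩ := hl
  rcases entry_cases d i (σ c) c (hz c) with ⟨he, hm⟩ | ⟨hlt, hm, hb⟩
  · rw [hm] at hc; simp at hc
  · rw [hm] at hc
    have := Finsupp.support_single_subset hc
    rw [Finset.mem_singleton] at this
    subst this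
    rw [Finset.mem_Icc]
    split_ifs at hb <;> omega

lemma rigidity (d i : ℕ) (hd : 2 ≤ d) (hi1 : 2 ≤ i) (hi2 : i ≤ d - 1)
    (σ : Equiv.Perm (Fin (d + (d - i) - 1)))
    (hz : ∀ c, ecoef d i (σ c) c ≠ 0)
    (hnu : nuP d i σ = Finsupp.single (d - 1) (d - i)) :
    σ = (finRotate (d + (d - i) - 1)) ^ (d - i) := by
  have hstep : ∀ c : Fin (d + (d - i) - 1),
      (c : ℕ) = offR d i (σ c) ∨ ((σ c : ℕ) < d - i ∧ (c : ℕ) = (σ c : ℕ) + (d - 1)) := by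
    intro c
    rcases entry_cases d i (σ c) c (hz c) with ⟨he, hm⟩ | ⟨hlt, hm, hbound⟩
    · left; exact he
    · have hl : (c : ℕ) - offR d i (σ c) = d - 1 := by
        by_contra hne
        have h1 : (nuP d i σ) ((c : ℕ) - offR d i (σ c))
            = Finsupp.single (d - 1) (d - i) ((c : ℕ) - offR d i (σ c)) := by rw [hnu]
        rw [nuP, Finsupp.finset_sum_apply] at h1
        have h2 : Finsupp.single (d - 1) (d - i) ((c : ℕ) - offR d i (σ c)) = 0 := by
          rw [Finsupp.single_apply, if_neg (by omega)]
        have h3 : (emon d i (σ c) c) ((c : ℕ) - offR d i (σ c))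
            ≤ ∑ c', (emon d i (σ c') c') ((c : ℕ) - offR d i (σ c)) :=
          Finset.single_le_sum
            (f := fun c' : Fin (d + (d - i) - 1) =>
              (emon d i (σ c') c') ((c : ℕ) - offR d i (σ c)))
            (fun _ _ => Nat.zero_le _) (Finset.mem_univ c)
        rw [hm, Finsupp.single_apply, if_pos rfl] at h3
        omega
      by_cases hrow : (σ c : ℕ) < d - i
      · right
        refine ⟨hrow, ?_⟩
        rw [offR, if_pos hrow] at hl hlt
        omega
      · exfalso
        rw [if_neg hrow] at hbound
        omega
  have hbig : ∀ c : Fin (d + (d - i) - 1), d - 1 ≤ (c : ℕ) →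
      (σ c : ℕ) = (c : ℕ) - (d - 1) ∧ (σ c : ℕ) < d - i := by
    intro c hc
    rcases hstep c with h | h
    · exfalso
      rw [offR] at h
      have hlt := (σ c).isLt
      split_ifs at h with hr <;> omega
    · omega
  have hsmall : ∀ c : Fin (d + (d - i) - 1), (c : ℕ) < d - 1 →
      (σ c : ℕ) = (c : ℕ) + (d - i) := by
    intro c hc
    have hrow : ¬ ((σ c : ℕ) < d - i) := by
      intro hr
      have hc'lt : (σ c : ℕ) + (d - 1) < d + (d - i) - 1 := by omega
      set c' : Fin (d + (d - i) - 1) := ⟨(σ c : ℕ) + (d - 1), hc'lt⟩ with hc'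
      obtain ⟨h1, h2⟩ := hbig c' (Nat.le_add_left _ _)
      have heq : σ c' = σ c := by
        apply Fin.ext
        rw [h1]
        simp [hc']
      have := σ.injective heq
      have : (c' : ℕ) = (c : ℕ) := by rw [this]
      simp [hc'] at this
      omega
    rcases hstep c with h | h
    · rw [offR, if_neg hrow] at h
      have := (σ c).isLt
      omega
    · exact absurd h.1 hrow
  apply Equiv.ext
  intro c
  apply Fin.ext
  rw [rot_pow_apply]
  have hclt := c.isLt
  by_cases hc : (c : ℕ) < d - 1
  · rw [Nat.mod_eq_of_lt (by omega)]
    exact hsmall c hc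
  · obtain ⟨h1, -⟩ := hbig c (by omega)
    rw [Nat.mod_eq_sub_mod (by omega), Nat.mod_eq_of_lt (by omega)]
    omega

lemma sig0_entries (d i : ℕ) (hd : 2 ≤ d) (hi1 : 2 ≤ i) (hi2 : i ≤ d - 1)
    (c : Fin (d + (d - i) - 1)) :
    emon d i (((finRotate (d + (d - i) - 1)) ^ (d - i)) c) c
        = (if (c : ℕ) < d - 1 then 0 else Finsupp.single (d - 1) 1) ∧
    ecoef d i (((finRotate (d + (d - i) - 1)) ^ (d - i)) c) c
        = (if (c : ℕ) < d - 1 then (d.choose i : ℤ) else 1) := by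
  have hclt := c.isLt
  have hval : ((((finRotate (d + (d - i) - 1)) ^ (d - i)) c : Fin _) : ℕ)
      = ((c : ℕ) + (d - i)) % (d + (d - i) - 1) := rot_pow_apply _ _ _
  by_cases hc : (c : ℕ) < d - 1
  · have hv : ((((finRotate (d + (d - i) - 1)) ^ (d - i)) c : Fin _) : ℕ) = (c : ℕ) + (d - i) := by
      rw [hval, Nat.mod_eq_of_lt (by omega)]
    rw [emon, ecoef, hv, if_pos hc, if_pos hc]
    constructor
    · split_ifs <;> first | rfl | (exfalso; omega)
    · split_ifs <;> first | rfl | (exfalso; omega)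
  · have hv : ((((finRotate (d + (d - i) - 1)) ^ (d - i)) c : Fin _) : ℕ) = (c : ℕ) - (d - 1) := by
      rw [hval, Nat.mod_eq_sub_mod (by omega), Nat.mod_eq_of_lt (by omega)]
      omega
    rw [emon, ecoef, hv, if_neg hc, if_neg hc]
    constructor
    · split_ifs <;>
        first
          | (exfalso; omega)
          | (rw [show (c : ℕ) - ((c : ℕ) - (d - 1)) = d - 1 from by omega])
    · split_ifs <;> first | rfl | (exfalso; omega)
lemma nuP_sig0 (d i : ℕ) (hd : 2 ≤ d) (hi1 : 2 ≤ i) (hi2 : i ≤ d - 1) :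
    nuP d i ((finRotate (d + (d - i) - 1)) ^ (d - i)) = Finsupp.single (d - 1) (d - i) := by
  rw [nuP]
  rw [Finset.sum_congr rfl (fun c _ => (sig0_entries d i hd hi1 hi2 c).1)]
  rw [Fin.sum_univ_eq_sum_range (fun x => if x < d - 1 then 0 else Finsupp.single (d - 1) 1)]
  rw [← Finset.sum_range_add_sum_Ico _ (show d - 1 ≤ d + (d - i) - 1 by omega)]
  rw [Finset.sum_eq_zero (fun x hx => by rw [if_pos (Finset.mem_range.mp hx)])]
  rw [Finset.sum_congr rfl (fun x hx => by
    rw [if_neg (by have := (Finset.mem_Ico.mp hx).1; omega)])]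
  rw [Finset.sum_const, Nat.card_Ico, Finsupp.smul_single, zero_add, smul_eq_mul, mul_one]
  rw [show d + (d - i) - 1 - (d - 1) = d - i by omega]

lemma aP_sig0 (d i : ℕ) (hd : 2 ≤ d) (hi1 : 2 ≤ i) (hi2 : i ≤ d - 1) :
    aP d i ((finRotate (d + (d - i) - 1)) ^ (d - i)) = (d.choose i : ℤ) ^ (d - 1) := by
  rw [aP]
  rw [Finset.prod_congr rfl (fun c _ => (sig0_entries d i hd hi1 hi2 c).2)]
  rw [Fin.prod_univ_eq_prod_range (fun x => if x < d - 1 then (d.choose i : ℤ) else 1)]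
  rw [← Finset.prod_range_mul_prod_Ico _ (show d - 1 ≤ d + (d - i) - 1 by omega)]
  have e1 : (∏ k ∈ Finset.range (d - 1), (if k < d - 1 then (d.choose i : ℤ) else 1))
      = ∏ _k ∈ Finset.range (d - 1), (d.choose i : ℤ) :=
    Finset.prod_congr rfl (fun x hx => if_pos (Finset.mem_range.mp hx))
  have e2 : (∏ k ∈ Finset.Ico (d - 1) (d + (d - i) - 1), (if k < d - 1 then (d.choose i : ℤ) else 1))
      = ∏ _k ∈ Finset.Ico (d - 1) (d + (d - i) - 1), (1 : ℤ) :=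
    Finset.prod_congr rfl (fun x hx => if_neg (by have := (Finset.mem_Ico.mp hx).1; omega))
  rw [e1, e2, Finset.prod_const, Finset.prod_const_one, Finset.card_range, mul_one]

def degF (μ : ℕ →₀ ℕ) : ℕ := μ.sum fun _ e => e

lemma degF_add (μ ν : ℕ →₀ ℕ) : degF (μ + ν) = degF μ + degF ν := by
  simp [degF, Finsupp.sum_add_index]

lemma degF_single (l e : ℕ) : degF (Finsupp.single l e) = e := by
  simp [degF, Finsupp.sum_single_index]

lemma bound_lemma (d i : ℕ) (hd : 2 ≤ d) (hi1 : 2 ≤ i) (hi2 : i ≤ d - 1) (μ : ℕ →₀ ℕ)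
    (hw : wtF μ = (d - i) * (d - 1)) (hs : μ.support ⊆ Finset.Icc 1 (d - 1)) :
    d - i ≤ degF μ ∧ (degF μ = d - i → μ = Finsupp.single (d - 1) (d - i)) := by
  have h1 : ∀ l ∈ μ.support, μ l * l ≤ μ l * (d - 1) := by
    intro l hl
    have := Finset.mem_Icc.mp (hs hl)
    exact Nat.mul_le_mul_left _ (by omega)
  have h2 : wtF μ ≤ degF μ * (d - 1) := by
    rw [wtF, degF, Finsupp.sum, Finsupp.sum, Finset.sum_mul]
    exact Finset.sum_le_sum h1
  constructor
  · rw [hw] at h2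
    exact Nat.le_of_mul_le_mul_right (by rw [mul_comm (d-i)] at h2; rwa [mul_comm (degF μ)] at h2) (by omega)
  · intro hdeg
    have h3 : ∑ l ∈ μ.support, μ l * l = ∑ l ∈ μ.support, μ l * (d - 1) := by
      have : ∑ l ∈ μ.support, μ l * (d - 1) = degF μ * (d - 1) := by
        rw [degF, Finsupp.sum, Finset.sum_mul]
      rw [this, hdeg, ← hw, wtF, Finsupp.sum]
    have h4 := (Finset.sum_eq_sum_iff_of_le h1).mp h3
    have h5 : μ.support ⊆ {d - 1} := by
      intro l hl
      have hμl := Finsupp.mem_support_iff.mp hl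
      have := h4 l hl
      rw [Finset.mem_singleton]
      have := Nat.eq_of_mul_eq_mul_left (Nat.pos_of_ne_zero hμl) this
      omega
    have h6 := Finsupp.support_subset_singleton.mp h5
    rw [h6]
    congr 1
    have h7 : degF μ = μ (d - 1) := by
      conv_lhs => rw [h6]
      exact degF_single _ _
    omega

lemma det_struct (d i : ℕ) (hd : 2 ≤ d) (hi1 : 2 ≤ i) (hi2 : i ≤ d - 1) (μ : ℕ →₀ ℕ)
    (h : MvPolynomial.coeff μ (M1 d i).det ≠ 0) :
    wtF μ = (d - i) * (d - 1) ∧ μ.support ⊆ Finset.Icc 1 (d - 1) := by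
  rw [Matrix.det_apply] at h
  rw [MvPolynomial.coeff_sum] at h
  obtain ⟨σ, -, hσ⟩ := Finset.exists_ne_zero_of_sum_ne_zero h
  rw [prod_M1_entries, MvPolynomial.coeff_smul, MvPolynomial.coeff_monomial] at hσ
  by_cases hnu : nuP d i σ = μ
  · rw [if_pos hnu] at hσ
    have ha : aP d i σ ≠ 0 := by
      intro h0; rw [h0] at hσ; simp at hσ
    have hz := aP_ne_zero d i σ ha
    exact hnu ▸ ⟨wt_nuP d i hd hi1 hi2 σ hz, supp_nuP d i hd hi1 hi2 σ hz⟩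
  · rw [if_neg hnu] at hσ; simp at hσ

lemma det_coeff_min (d i : ℕ) (hd : 2 ≤ d) (hi1 : 2 ≤ i) (hi2 : i ≤ d - 1) :
    MvPolynomial.coeff (Finsupp.single (d - 1) (d - i)) (M1 d i).det
      = (-1) ^ ((d - 1) * (d - i)) * (d.choose i : ℤ) ^ (d - 1) := by
  rw [Matrix.det_apply, MvPolynomial.coeff_sum]
  rw [Finset.sum_eq_single ((finRotate (d + (d - i) - 1)) ^ (d - i))]
  · rw [prod_M1_entries, MvPolynomial.coeff_smul, MvPolynomial.coeff_monomial,
      if_pos (nuP_sig0 d i hd hi1 hi2), aP_sig0 d i hd hi1 hi2,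
      rot_pow_sign _ _ (by omega), Units.smul_def]
    have hcast : (((-1 : ℤˣ) ^ ((d + (d - i) - 1 - 1) * (d - i)) : ℤˣ) : ℤ)
        = (-1 : ℤ) ^ ((d + (d - i) - 1 - 1) * (d - i)) := by
      push_cast
      rfl
    rw [hcast]
    congr 1
    have hsplit : (d + (d - i) - 1 - 1) * (d - i) = (d - 1) * (d - i) + (d - i - 1) * (d - i) := by
      rw [show d + (d - i) - 1 - 1 = (d - 1) + (d - i - 1) by omega, add_mul]
    rw [hsplit, pow_add]
    have heven : Even ((d - i - 1) * (d - i)) := by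
      have h := Nat.even_mul_succ_self (d - i - 1)
      rwa [show d - i - 1 + 1 = d - i from by omega] at h
    rw [heven.neg_one_pow, mul_one]
  · intro σ _ hne
    rw [prod_M1_entries, MvPolynomial.coeff_smul, MvPolynomial.coeff_monomial]
    by_cases ha : aP d i σ = 0
    · split_ifs <;> simp [ha]
    · rw [if_neg]
      · simp
      · intro hnu
        exact hne (rigidity d i hd hi1 hi2 σ (aP_ne_zero d i σ ha) hnu)
  · intro h
    exact absurd (Finset.mem_univ _) h


/-- Every monomial of `R_i` has total degree at least `d - i + 1`, and the unique monomial of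
total degree exactly `d - i + 1` is `a_{d-1}^{d-i} a_{d-i}`, with coefficient
`(-1)^{(d-1)(d-i)} C(d,i)^{d-1}`. -/
theorem resultant_min_degree_monomial (d i : ℕ) (hd : 2 ≤ d)
    (hi1 : 2 ≤ i) (hi2 : i ≤ d - 1) :
    (∀ m : ℕ →₀ ℕ, MvPolynomial.coeff m (Rres d i) ≠ 0 →
        d - i + 1 ≤ m.sum fun _ e => e) ∧
    (∀ m : ℕ →₀ ℕ, MvPolynomial.coeff m (Rres d i) ≠ 0 →
        (m.sum fun _ e => e) = d - i + 1 →
        m = Finsupp.single (d - 1) (d - i) + Finsupp.single (d - i) 1) ∧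
    MvPolynomial.coeff (Finsupp.single (d - 1) (d - i) + Finsupp.single (d - i) 1)
        (Rres d i) =
      (-1) ^ ((d - 1) * (d - i)) * (d.choose i : ℤ) ^ (d - 1) := by
  have hfac := Rres_eq d i hd hi1 hi2
  have key : ∀ m : ℕ →₀ ℕ, MvPolynomial.coeff m (Rres d i) ≠ 0 →
      m (d - i) ≠ 0 ∧ MvPolynomial.coeff (m - Finsupp.single (d - i) 1) (M1 d i).det ≠ 0 := by
    intro m hm
    rw [hfac, MvPolynomial.coeff_mul_X'] at hm
    split_ifs at hm with h
    · exact ⟨Finsupp.mem_support_iff.mp h, hm⟩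
    · exact absurd rfl hm
  have main : ∀ m : ℕ →₀ ℕ, MvPolynomial.coeff m (Rres d i) ≠ 0 →
      m = (m - Finsupp.single (d - i) 1) + Finsupp.single (d - i) 1 ∧
      d - i ≤ degF (m - Finsupp.single (d - i) 1) ∧
      (degF (m - Finsupp.single (d - i) 1) = d - i →
        (m - Finsupp.single (d - i) 1) = Finsupp.single (d - 1) (d - i)) := by
    intro m hm
    obtain ⟨hmem, hcoeff⟩ := key m hm
    obtain ⟨hw, hs⟩ := det_struct d i hd hi1 hi2 _ hcoeff
    obtain ⟨hb1, hb2⟩ := bound_lemma d i hd hi1 hi2 _ hw hs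
    refine ⟨?_, hb1, hb2⟩
    ext l
    rw [Finsupp.add_apply, Finsupp.tsub_apply, Finsupp.single_apply]
    split_ifs with h
    · subst h; omega
    · omega
  refine ⟨?_, ?_, ?_⟩
  · intro m hm
    obtain ⟨hm_eq, hb1, -⟩ := main m hm
    show d - i + 1 ≤ degF m
    conv_rhs => rw [hm_eq]
    rw [degF_add, degF_single]
    omega
  · intro m hm hdeg
    obtain ⟨hm_eq, hb1, hb2⟩ := main m hm
    have hdeg' : degF m = d - i + 1 := hdeg
    have h1 : degF (m - Finsupp.single (d - i) 1) = d - i := by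
      have : degF m = degF (m - Finsupp.single (d - i) 1) + 1 := by
        conv_lhs => rw [hm_eq]
        rw [degF_add, degF_single]
      omega
    rw [hm_eq, hb2 h1]
  · rw [hfac, MvPolynomial.coeff_mul_X']
    rw [if_pos, show (Finsupp.single (d - 1) (d - i) + Finsupp.single (d - i) 1
        - Finsupp.single (d - i) 1) = Finsupp.single (d - 1) (d - i) by
      ext l
      rw [Finsupp.tsub_apply, Finsupp.add_apply]
      omega]
    · exact det_coeff_min d i hd hi1 hi2
    · rw [Finsupp.mem_support_iff, Finsupp.add_apply, Finsupp.single_apply,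
        Finsupp.single_apply, if_neg (by omega), if_pos rfl]
      omega
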